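/- Let $n \ge 2$ and let $M_n^\ast$ be the matrix of Definition below. Then for all $1 \le i,j \le n$, writing $x = (n+1-2i)/(n-1)$ and $y = (n+1-2j)/(n-1)$, one has $(M_n^\ast)_{ij} = \frac{\mathbb{1}_{x\ge y} - \mathbb{1}_{x\le y}}{2} - \frac{3(x-y)(1-1/n)}{4} - \frac{3xy(x-y)(n-1)^2}{4n(n+1)}$. In particular $M_n^\ast$ is skew-symmetric and its entries are bounded by an absolute constant independent of $n$. -/

import Mathlib

open Matrix

/-- `v₁ ∈ ℝⁿ`, the unit vector with entries `1/√n`. -/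
noncomputable def v1 (n : ℕ) : Fin n → ℝ := fun _ => 1 / Real.sqrt n

/-- `v₂ ∈ ℝⁿ`, the unit vector with entries `(i - (n+1)/2)/√(n(n²-1)/12)` (for
`i = 1, …, n`; index `i : Fin n` encodes the value `i + 1`). -/
noncomputable def v2 (n : ℕ) : Fin n → ℝ := fun i =>
  (((i : ℕ) + 1 : ℝ) - ((n : ℝ) + 1) / 2) / Real.sqrt ((n : ℝ) * ((n : ℝ) ^ 2 - 1) / 12)

/-- The matrix `(M_n)_{ij} = 1_{i<j} + (1/2) 1_{i=j}`. -/
noncomputable def Mmat (n : ℕ) : Matrix (Fin n) (Fin n) ℝ :=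
  Matrix.of fun i j => if i < j then 1 else if i = j then 1 / 2 else 0

/-- The projection `I - v₁v₁ᵀ - v₂v₂ᵀ`. -/
noncomputable def projMat (n : ℕ) : Matrix (Fin n) (Fin n) ℝ :=
  1 - Matrix.vecMulVec (v1 n) (v1 n) - Matrix.vecMulVec (v2 n) (v2 n)

/-- `M_n^* = (I - v₁v₁ᵀ - v₂v₂ᵀ) M_n (I - v₁v₁ᵀ - v₂v₂ᵀ)`. -/
noncomputable def Mstar (n : ℕ) : Matrix (Fin n) (Fin n) ℝ :=
  projMat n * Mmat n * projMat n

lemma sum_ite_lt' (n L : ℕ) (hL : L ≤ n) (p : ℕ → ℝ) :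
    ∑ m ∈ Finset.range n, (if m < L then p m else 0) = ∑ m ∈ Finset.range L, p m := by
  rw [← Finset.sum_filter]; congr 1; ext m
  simp only [Finset.mem_filter, Finset.mem_range]; omega

lemma sum_range_id' (L : ℕ) : ∑ m ∈ Finset.range L, (m:ℝ) = L*((L:ℝ)-1)/2 := by
  induction L with
  | zero => simp
  | succ L ih => rw [Finset.sum_range_succ, ih]; push_cast; ring

lemma sum_range_sq' (L : ℕ) : ∑ m ∈ Finset.range L, (m:ℝ)^2 = L*((L:ℝ)-1)*(2*L-1)/6 := by
  induction L with
  | zero => simp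
  | succ L ih => rw [Finset.sum_range_succ, ih]; push_cast; ring

lemma sum_range_cube' (L : ℕ) : ∑ m ∈ Finset.range L, (m:ℝ)^3 = (L:ℝ)^2*((L:ℝ)-1)^2/4 := by
  induction L with
  | zero => simp
  | succ L ih => rw [Finset.sum_range_succ, ih]; push_cast; ring

lemma Mmat_apply (n : ℕ) (k l : Fin n) :
    Mmat n k l = (if (k:ℕ) < (l:ℕ) then (1:ℝ) else 0) + (if k = l then 1/2 else 0) := by
  simp only [Mmat, Matrix.of_apply, Fin.lt_def]
  rcases lt_trichotomy (k:ℕ) (l:ℕ) with h | h | h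
  · simp [h, Fin.ext_iff, Nat.ne_of_lt h]
  · simp [Fin.ext_iff, h]
  · simp [h, Nat.lt_asymm h, Fin.ext_iff, Nat.ne_of_gt h]

lemma col_sum (n : ℕ) (l : Fin n) (p : ℕ → ℝ) :
    ∑ k : Fin n, p k * Mmat n k l = (∑ m ∈ Finset.range (l:ℕ), p m) + p l / 2 := by
  simp only [Mmat_apply, mul_add, mul_ite, mul_one, mul_zero]
  rw [Finset.sum_add_distrib]
  congr 1
  · rw [Fin.sum_univ_eq_sum_range (fun m => if m < (l:ℕ) then p m else 0)]
    exact sum_ite_lt' n l (le_of_lt l.isLt) p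
  · rw [Finset.sum_ite_eq' Finset.univ l (fun k => p k * (1/2))]
    simp [div_eq_mul_inv]

lemma row_sum (n : ℕ) (i : Fin n) (p : ℕ → ℝ) :
    ∑ l : Fin n, Mmat n i l * p l =
      (∑ m ∈ Finset.range n, p m) - (∑ m ∈ Finset.range ((i:ℕ)+1), p m) + p i / 2 := by
  simp only [Mmat_apply, add_mul, ite_mul, one_mul, zero_mul]
  rw [Finset.sum_add_distrib]
  have h1 : ∑ l : Fin n, (if (i:ℕ) < (l:ℕ) then p l else 0)
      = (∑ m ∈ Finset.range n, p m) - (∑ m ∈ Finset.range ((i:ℕ)+1), p m) := by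
    have : ∀ l : Fin n, (if (i:ℕ) < (l:ℕ) then p l else 0)
        = p l - (if (l:ℕ) < (i:ℕ)+1 then p l else 0) := by
      intro l
      rcases Nat.lt_or_ge (i:ℕ) (l:ℕ) with h | h
      · rw [if_pos h, if_neg (by omega)]; ring
      · rw [if_neg (by omega), if_pos (by omega)]; ring
    rw [Finset.sum_congr rfl (fun l _ => this l), Finset.sum_sub_distrib]
    congr 1
    · exact Fin.sum_univ_eq_sum_range p n
    · rw [Fin.sum_univ_eq_sum_range (fun m => if m < (i:ℕ)+1 then p m else 0)]
      exact sum_ite_lt' n ((i:ℕ)+1) i.isLt p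
  rw [h1]
  congr 1
  rw [Finset.sum_ite_eq Finset.univ i (fun l => (1/2) * p l)]
  simp; ring

lemma projMat_apply (n : ℕ) (hn : 2 ≤ n) (i k : Fin n) :
    projMat n i k = (if i = k then (1:ℝ) else 0) - 1/(n:ℝ)
      - 12/((n:ℝ)*((n:ℝ)^2-1)) * (((i:ℕ):ℝ) - ((n:ℝ)-1)/2) * (((k:ℕ):ℝ) - ((n:ℝ)-1)/2) := by
  have hn2 : (2:ℝ) ≤ (n:ℝ) := by exact_mod_cast hn
  have hn0 : (0:ℝ) < (n:ℝ) := by linarith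
  have hq : (0:ℝ) < (n:ℝ)*((n:ℝ)^2-1) := by nlinarith
  have h1 : Real.sqrt n * Real.sqrt n = (n:ℝ) := Real.mul_self_sqrt hn0.le
  have h2 : Real.sqrt ((n:ℝ)*((n:ℝ)^2-1)/12) * Real.sqrt ((n:ℝ)*((n:ℝ)^2-1)/12)
      = (n:ℝ)*((n:ℝ)^2-1)/12 := Real.mul_self_sqrt (by linarith)
  simp only [projMat, Matrix.sub_apply, Matrix.one_apply, Matrix.vecMulVec_apply, v1, v2]
  rw [div_mul_div_comm, div_mul_div_comm, h1, h2]
  have hq' : (n:ℝ)*((n:ℝ)^2-1) ≠ 0 := ne_of_gt hq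
  field_simp
  ring

lemma innerSumM (n : ℕ) (hn : 2 ≤ n) (i l : Fin n) :
    ∑ k : Fin n, projMat n i k * Mmat n k l =
      Mmat n i l - (((l:ℕ):ℝ) + 1/2)/(n:ℝ)
      - 12/((n:ℝ)*((n:ℝ)^2-1)) * (((i:ℕ):ℝ) - ((n:ℝ)-1)/2)
        * ((((l:ℕ):ℝ))^2/2 - (((n:ℝ)-1)/2)*(((l:ℕ):ℝ) + 1/2)) := by
  have h1 : ∑ k : Fin n, (if i = k then (1:ℝ) else 0) * Mmat n k l = Mmat n i l := by
    simp only [ite_mul, one_mul, zero_mul]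
    rw [Finset.sum_ite_eq Finset.univ i (fun k => Mmat n k l)]
    simp
  have h2 : ∑ k : Fin n, Mmat n k l = ((l:ℕ):ℝ) + 1/2 := by
    have := col_sum n l (fun _ => (1:ℝ))
    simp only [one_mul] at this
    rw [this]; simp
  have h3 : ∑ k : Fin n, ((k:ℕ):ℝ) * Mmat n k l = (((l:ℕ):ℝ))^2/2 := by
    rw [col_sum n l (fun m => (m:ℝ)), sum_range_id']
    ring
  have step : ∀ k : Fin n, projMat n i k * Mmat n k l =
      (if i = k then (1:ℝ) else 0) * Mmat n k l
      - (1/(n:ℝ)) * Mmat n k l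
      - (12/((n:ℝ)*((n:ℝ)^2-1)) * (((i:ℕ):ℝ) - ((n:ℝ)-1)/2)) * (((k:ℕ):ℝ) * Mmat n k l)
      + (12/((n:ℝ)*((n:ℝ)^2-1)) * (((i:ℕ):ℝ) - ((n:ℝ)-1)/2) * (((n:ℝ)-1)/2)) * Mmat n k l := by
    intro k
    rw [projMat_apply n hn]
    ring
  rw [Finset.sum_congr rfl (fun k _ => step k)]
  rw [Finset.sum_add_distrib, Finset.sum_sub_distrib, Finset.sum_sub_distrib,
    ← Finset.mul_sum, ← Finset.mul_sum, ← Finset.mul_sum, h1, h2, h3]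
  ring

lemma delta_sum (n : ℕ) (j : Fin n) (F : Fin n → ℝ) :
    ∑ l : Fin n, (if l = j then (1:ℝ) else 0) * F l = F j := by
  simp only [ite_mul, one_mul, zero_mul]
  rw [Finset.sum_ite_eq' Finset.univ j F]
  simp

set_option maxHeartbeats 2000000 in
lemma Mstar_closed (n : ℕ) (hn : 2 ≤ n) (i j : Fin n) :
    Mstar n i j = Mmat n i j - (((j:ℕ):ℝ) + 1/2)/(n:ℝ) - 12/((n:ℝ)*((n:ℝ)^2-1))*(((i:ℕ):ℝ) - (((n:ℝ)-1)/2))*((((j:ℕ):ℝ))^2/2 - (((n:ℝ)-1)/2)*(((j:ℕ):ℝ)+1/2)) + 12/((n:ℝ)*((n:ℝ)^2-1))*(((j:ℕ):ℝ) - (((n:ℝ)-1)/2))/2*((((i:ℕ):ℝ))^2 - ((n:ℝ)*((n:ℝ)-1)*(2*(n:ℝ)-1)/6)/(n:ℝ) - 12/((n:ℝ)*((n:ℝ)^2-1))*(((i:ℕ):ℝ) - (((n:ℝ)-1)/2))*(((n:ℝ)^2*((n:ℝ)-1)^2/4) - (((n:ℝ)-1)/2)*((n:ℝ)*((n:ℝ)-1)*(2*(n:ℝ)-1)/6)))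 := by
  have hn2 : (2:ℝ) ≤ (n:ℝ) := by exact_mod_cast hn
  have hmul : Mstar n i j = ∑ l : Fin n, (∑ k : Fin n, projMat n i k * Mmat n k l) * projMat n l j := by
    simp [Mstar, Matrix.mul_apply]
  have A0 : ∑ _l : Fin n, (1:ℝ) = (n:ℝ) := by simp
  have A1 : ∑ l : Fin n, Mmat n i l = (n:ℝ) - ((i:ℕ):ℝ) - 1/2 := by
    have := row_sum n i (fun _ => (1:ℝ))
    simp only [mul_one] at this
    rw [this]
    simp
    push_cast
    ring
  have A2 : ∑ l : Fin n, ((l:ℕ):ℝ) = (n:ℝ)*((n:ℝ)-1)/2 := by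
    rw [Fin.sum_univ_eq_sum_range (fun m => (m:ℝ)) n, sum_range_id']
  have A3 : ∑ l : Fin n, (((l:ℕ):ℝ))^2 = ((n:ℝ)*((n:ℝ)-1)*(2*(n:ℝ)-1)/6) := by
    rw [Fin.sum_univ_eq_sum_range (fun m => (m:ℝ)^2) n, sum_range_sq']
  have A4 : ∑ l : Fin n, (((l:ℕ):ℝ))^3 = ((n:ℝ)^2*((n:ℝ)-1)^2/4) := by
    rw [Fin.sum_univ_eq_sum_range (fun m => (m:ℝ)^3) n, sum_range_cube']
  have A5 : ∑ l : Fin n, Mmat n i l * ((l:ℕ):ℝ) = (n:ℝ)*((n:ℝ)-1)/2 - (((i:ℕ):ℝ))^2/2 := by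
    rw [row_sum n i (fun m => (m:ℝ)), sum_range_id', sum_range_id']
    push_cast
    ring
  have key : ∀ l : Fin n, (∑ k : Fin n, projMat n i k * Mmat n k l) * projMat n l j =
      (if l = j then (1:ℝ) else 0) * (Mmat n i l - (((l:ℕ):ℝ) + 1/2)/(n:ℝ) - 12/((n:ℝ)*((n:ℝ)^2-1)) * (((i:ℕ):ℝ) - (((n:ℝ)-1)/2)) * ((((l:ℕ):ℝ))^2/2 - (((n:ℝ)-1)/2)*(((l:ℕ):ℝ) + 1/2)))
      + (12/((n:ℝ)*((n:ℝ)^2-1))*(((j:ℕ):ℝ) - (((n:ℝ)-1)/2))*(((n:ℝ)-1)/2) - 1/(n:ℝ)) * (Mmat n i l)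
      + ((12/((n:ℝ)*((n:ℝ)^2-1))*(((j:ℕ):ℝ) - (((n:ℝ)-1)/2))*(((n:ℝ)-1)/2) - 1/(n:ℝ))*(-(1/(n:ℝ)) + 12/((n:ℝ)*((n:ℝ)^2-1))*(((i:ℕ):ℝ) - (((n:ℝ)-1)/2))*(((n:ℝ)-1)/2)) + (-(12/((n:ℝ)*((n:ℝ)^2-1))*(((j:ℕ):ℝ) - (((n:ℝ)-1)/2))))*(-(1/(2*(n:ℝ))) + 12/((n:ℝ)*((n:ℝ)^2-1))*(((i:ℕ):ℝ) - (((n:ℝ)-1)/2))*(((n:ℝ)-1)/2)/2)) * ((l:ℕ):ℝ)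
      + ((12/((n:ℝ)*((n:ℝ)^2-1))*(((j:ℕ):ℝ) - (((n:ℝ)-1)/2))*(((n:ℝ)-1)/2) - 1/(n:ℝ))*(-(12/((n:ℝ)*((n:ℝ)^2-1))*(((i:ℕ):ℝ) - (((n:ℝ)-1)/2)))/2) + (-(12/((n:ℝ)*((n:ℝ)^2-1))*(((j:ℕ):ℝ) - (((n:ℝ)-1)/2))))*(-(1/(n:ℝ)) + 12/((n:ℝ)*((n:ℝ)^2-1))*(((i:ℕ):ℝ) - (((n:ℝ)-1)/2))*(((n:ℝ)-1)/2))) * ((((l:ℕ):ℝ))^2)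
      + ((-(12/((n:ℝ)*((n:ℝ)^2-1))*(((j:ℕ):ℝ) - (((n:ℝ)-1)/2))))*(-(12/((n:ℝ)*((n:ℝ)^2-1))*(((i:ℕ):ℝ) - (((n:ℝ)-1)/2)))/2)) * ((((l:ℕ):ℝ))^3)
      + (-(12/((n:ℝ)*((n:ℝ)^2-1))*(((j:ℕ):ℝ) - (((n:ℝ)-1)/2)))) * (Mmat n i l * ((l:ℕ):ℝ))
      + ((12/((n:ℝ)*((n:ℝ)^2-1))*(((j:ℕ):ℝ) - (((n:ℝ)-1)/2))*(((n:ℝ)-1)/2) - 1/(n:ℝ))*(-(1/(2*(n:ℝ))) + 12/((n:ℝ)*((n:ℝ)^2-1))*(((i:ℕ):ℝ) - (((n:ℝ)-1)/2))*(((n:ℝ)-1)/2)/2)) * 1 := by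
    intro l
    rw [innerSumM n hn i l, projMat_apply n hn l j]
    ring
  rw [hmul, Finset.sum_congr rfl (fun l _ => key l)]
  rw [Finset.sum_add_distrib, Finset.sum_add_distrib, Finset.sum_add_distrib,
    Finset.sum_add_distrib, Finset.sum_add_distrib, Finset.sum_add_distrib,
    ← Finset.mul_sum, ← Finset.mul_sum, ← Finset.mul_sum, ← Finset.mul_sum, ← Finset.mul_sum, ← Finset.mul_sum,
    delta_sum n j (fun l => (Mmat n i l - (((l:ℕ):ℝ) + 1/2)/(n:ℝ) - 12/((n:ℝ)*((n:ℝ)^2-1)) * (((i:ℕ):ℝ) - (((n:ℝ)-1)/2)) * ((((l:ℕ):ℝ))^2/2 - (((n:ℝ)-1)/2)*(((l:ℕ):ℝ) + 1/2)))), A0, A1, A2, A3, A4, A5]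
  have hne : (n:ℝ) ≠ 0 := by linarith
  have hne2 : (n:ℝ)*((n:ℝ)^2-1) ≠ 0 := by nlinarith
  have hne4 : (n:ℝ)^2-1 ≠ 0 := by nlinarith
  field_simp
  ring

lemma Mmat_flip (n : ℕ) (i j : Fin n) : Mmat n j i = 1 - Mmat n i j := by
  simp only [Mmat, Matrix.of_apply]
  rcases lt_trichotomy i j with h | h | h
  · rw [if_neg (lt_asymm h), if_neg (ne_of_gt h), if_pos h]; norm_num
  · subst h
    norm_num
  · rw [if_pos h, if_neg (lt_asymm h), if_neg (ne_of_gt h)]; norm_num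

set_option maxHeartbeats 2000000 in
lemma part1 : ∀ n : ℕ, 2 ≤ n → ∀ i j : Fin n,
      Mstar n i j =
        (((if ((n : ℝ) + 1 - 2 * ((i : ℕ) + 1)) / ((n : ℝ) - 1)
              ≥ ((n : ℝ) + 1 - 2 * ((j : ℕ) + 1)) / ((n : ℝ) - 1) then (1 : ℝ) else 0)
          - (if ((n : ℝ) + 1 - 2 * ((i : ℕ) + 1)) / ((n : ℝ) - 1)
              ≤ ((n : ℝ) + 1 - 2 * ((j : ℕ) + 1)) / ((n : ℝ) - 1) then (1 : ℝ) else 0)) / 2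
          - 3 * (((n : ℝ) + 1 - 2 * ((i : ℕ) + 1)) / ((n : ℝ) - 1)
              - ((n : ℝ) + 1 - 2 * ((j : ℕ) + 1)) / ((n : ℝ) - 1)) * (1 - 1 / (n : ℝ)) / 4
          - 3 * (((n : ℝ) + 1 - 2 * ((i : ℕ) + 1)) / ((n : ℝ) - 1))
              * (((n : ℝ) + 1 - 2 * ((j : ℕ) + 1)) / ((n : ℝ) - 1))
              * (((n : ℝ) + 1 - 2 * ((i : ℕ) + 1)) / ((n : ℝ) - 1)
                - ((n : ℝ) + 1 - 2 * ((j : ℕ) + 1)) / ((n : ℝ) - 1))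
              * ((n : ℝ) - 1) ^ 2 / (4 * (n : ℝ) * ((n : ℝ) + 1))) := by
  intro n hn i j
  have hn2 : (2:ℝ) ≤ (n:ℝ) := by exact_mod_cast hn
  have hd : (0:ℝ) < (n:ℝ) - 1 := by linarith
  have hne : (n:ℝ) ≠ 0 := by linarith
  have hne1 : (n:ℝ) - 1 ≠ 0 := ne_of_gt hd
  have hne2 : (n:ℝ) + 1 ≠ 0 := by linarith
  have hne3 : (n:ℝ)*((n:ℝ)^2-1) ≠ 0 := by nlinarith
  have hne4 : (n:ℝ)^2-1 ≠ 0 := by nlinarith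
  have hdivle : ∀ a b : ℝ, a ≤ b → a/((n:ℝ)-1) ≤ b/((n:ℝ)-1) := by
    intro a b h
    rw [div_le_div_iff₀ hd hd]; nlinarith
  have hdivlt : ∀ a b : ℝ, a < b → a/((n:ℝ)-1) < b/((n:ℝ)-1) := by
    intro a b h
    rw [div_lt_div_iff₀ hd hd]; nlinarith
  rw [Mstar_closed n hn i j, Mmat_apply]
  rcases lt_trichotomy (i:ℕ) (j:ℕ) with h | h | h
  · have hr : ((i:ℕ):ℝ) < ((j:ℕ):ℝ) := by exact_mod_cast h
    rw [if_pos h, if_neg (by rw [Fin.ext_iff]; omega),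
      if_pos (hdivle _ _ (by linarith)),
      if_neg (not_le.mpr (hdivlt _ _ (by linarith)))]
    field_simp
    ring
  · have hr : ((i:ℕ):ℝ) = ((j:ℕ):ℝ) := by exact_mod_cast h
    rw [if_neg (by omega), if_pos (by rw [Fin.ext_iff]; omega),
      if_pos (hdivle _ _ (by linarith)), if_pos (hdivle _ _ (by linarith))]
    field_simp
    ring
  · have hr : ((j:ℕ):ℝ) < ((i:ℕ):ℝ) := by exact_mod_cast h
    rw [if_neg (by omega), if_neg (by rw [Fin.ext_iff]; omega),
      if_neg (not_le.mpr (hdivlt _ _ (by linarith))),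
      if_pos (hdivle _ _ (by linarith))]
    field_simp
    ring

set_option maxHeartbeats 1000000 in
lemma part2 : ∀ n : ℕ, 2 ≤ n → (Mstar n)ᵀ = -(Mstar n) := by
  intro n hn
  have hn2 : (2:ℝ) ≤ (n:ℝ) := by exact_mod_cast hn
  have hne : (n:ℝ) ≠ 0 := by linarith
  have hne3 : (n:ℝ)*((n:ℝ)^2-1) ≠ 0 := by nlinarith
  have hne4 : (n:ℝ)^2-1 ≠ 0 := by nlinarith
  ext i j
  rw [Matrix.transpose_apply, Matrix.neg_apply, Mstar_closed n hn j i, Mstar_closed n hn i j,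
    Mmat_flip n i j]
  field_simp
  ring

set_option maxHeartbeats 1000000 in
lemma part3bound : ∀ n : ℕ, 2 ≤ n → ∀ i j : Fin n, |Mstar n i j| ≤ 10 := by
  intro n hn i j
  have hn2 : (2:ℝ) ≤ (n:ℝ) := by exact_mod_cast hn
  have hd : (0:ℝ) < (n:ℝ) - 1 := by linarith
  rw [part1 n hn i j]
  set x : ℝ := ((n : ℝ) + 1 - 2 * ((i : ℕ) + 1)) / ((n : ℝ) - 1) with hxdef
  set y : ℝ := ((n : ℝ) + 1 - 2 * ((j : ℕ) + 1)) / ((n : ℝ) - 1) with hydef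
  have hiN : ((i:ℕ):ℝ) ≤ (n:ℝ) - 1 := by
    have := i.isLt
    have : ((i:ℕ):ℝ) + 1 ≤ (n:ℝ) := by exact_mod_cast this
    linarith
  have hi0 : (0:ℝ) ≤ ((i:ℕ):ℝ) := Nat.cast_nonneg _
  have hjN : ((j:ℕ):ℝ) ≤ (n:ℝ) - 1 := by
    have := j.isLt
    have : ((j:ℕ):ℝ) + 1 ≤ (n:ℝ) := by exact_mod_cast this
    linarith
  have hj0 : (0:ℝ) ≤ ((j:ℕ):ℝ) := Nat.cast_nonneg _
  have hx : |x| ≤ 1 := by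
    rw [hxdef, abs_div, abs_of_pos hd, div_le_one hd, abs_le]
    constructor <;> linarith
  have hy : |y| ≤ 1 := by
    rw [hydef, abs_div, abs_of_pos hd, div_le_one hd, abs_le]
    constructor <;> linarith
  have hxy : |x - y| ≤ 2 := by
    calc |x - y| ≤ |x| + |y| := abs_sub x y
      _ ≤ 2 := by linarith
  have hu : |1 - 1/(n:ℝ)| ≤ 1 := by
    rw [abs_le]
    have h1 : (0:ℝ) < 1/(n:ℝ) := by positivity
    have h2 : 1/(n:ℝ) ≤ 1 := by rw [div_le_one (by linarith)]; linarith
    constructor <;> linarith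
  have he : |((n:ℝ) - 1)^2 / (4 * (n:ℝ) * ((n:ℝ) + 1))| ≤ 1/4 := by
    rw [abs_of_nonneg (by positivity), div_le_iff₀ (by positivity)]
    nlinarith
  have key : 3 * x * y * (x - y) * ((n:ℝ) - 1)^2 / (4 * (n:ℝ) * ((n:ℝ) + 1))
      = (3 * x * y * (x - y)) * (((n:ℝ) - 1)^2 / (4 * (n:ℝ) * ((n:ℝ) + 1))) := by
    ring
  have hT1 : |((if x ≥ y then (1:ℝ) else 0) - (if x ≤ y then (1:ℝ) else 0)) / 2| ≤ 1/2 := by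
    split_ifs <;> rw [abs_le] <;> constructor <;> norm_num
  have hT2 : |3 * (x - y) * (1 - 1/(n:ℝ)) / 4| ≤ 3/2 := by
    rw [abs_div, abs_mul, abs_mul]
    have hxy0 : (0:ℝ) ≤ |x - y| := abs_nonneg _
    have hu0 : (0:ℝ) ≤ |1 - 1/(n:ℝ)| := abs_nonneg _
    rw [show |(3:ℝ)| = 3 by norm_num, show |(4:ℝ)| = 4 by norm_num]
    rw [div_le_iff₀ (by norm_num : (0:ℝ) < 4)]
    nlinarith
  have hT3 : |3 * x * y * (x - y) * ((n:ℝ) - 1)^2 / (4 * (n:ℝ) * ((n:ℝ) + 1))| ≤ 3/2 := by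
    rw [key, abs_mul]
    have h1 : |3 * x * y * (x - y)| ≤ 6 := by
      rw [abs_mul, abs_mul, abs_mul, show |(3:ℝ)| = 3 by norm_num]
      have h0x : (0:ℝ) ≤ |x| := abs_nonneg _
      have h0y : (0:ℝ) ≤ |y| := abs_nonneg _
      have h0xy : (0:ℝ) ≤ |x - y| := abs_nonneg _
      have hxy1 : |x| * |y| ≤ 1 := by nlinarith
      nlinarith [mul_le_mul_of_nonneg_right hxy1 h0xy]
    have h2 : (0:ℝ) ≤ |3 * x * y * (x - y)| := abs_nonneg _
    have h3 : (0:ℝ) ≤ |((n:ℝ) - 1)^2 / (4 * (n:ℝ) * ((n:ℝ) + 1))| := abs_nonneg _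
    nlinarith
  calc |((if x ≥ y then (1:ℝ) else 0) - (if x ≤ y then (1:ℝ) else 0)) / 2
        - 3 * (x - y) * (1 - 1/(n:ℝ)) / 4
        - 3 * x * y * (x - y) * ((n:ℝ) - 1)^2 / (4 * (n:ℝ) * ((n:ℝ) + 1))|
      ≤ |((if x ≥ y then (1:ℝ) else 0) - (if x ≤ y then (1:ℝ) else 0)) / 2
        - 3 * (x - y) * (1 - 1/(n:ℝ)) / 4|
        + |3 * x * y * (x - y) * ((n:ℝ) - 1)^2 / (4 * (n:ℝ) * ((n:ℝ) + 1))| := abs_sub _ _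
    _ ≤ |((if x ≥ y then (1:ℝ) else 0) - (if x ≤ y then (1:ℝ) else 0)) / 2|
        + |3 * (x - y) * (1 - 1/(n:ℝ)) / 4|
        + |3 * x * y * (x - y) * ((n:ℝ) - 1)^2 / (4 * (n:ℝ) * ((n:ℝ) + 1))| := by
        have := abs_sub (((if x ≥ y then (1:ℝ) else 0) - (if x ≤ y then (1:ℝ) else 0)) / 2)
          (3 * (x - y) * (1 - 1/(n:ℝ)) / 4)
        linarith
    _ ≤ 1/2 + 3/2 + 3/2 := by linarith
    _ ≤ 10 := by norm_num

theorem stmt_13 :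
    (∀ n : ℕ, 2 ≤ n → ∀ i j : Fin n,
      Mstar n i j =
        (((if ((n : ℝ) + 1 - 2 * ((i : ℕ) + 1)) / ((n : ℝ) - 1)
              ≥ ((n : ℝ) + 1 - 2 * ((j : ℕ) + 1)) / ((n : ℝ) - 1) then (1 : ℝ) else 0)
          - (if ((n : ℝ) + 1 - 2 * ((i : ℕ) + 1)) / ((n : ℝ) - 1)
              ≤ ((n : ℝ) + 1 - 2 * ((j : ℕ) + 1)) / ((n : ℝ) - 1) then (1 : ℝ) else 0)) / 2
          - 3 * (((n : ℝ) + 1 - 2 * ((i : ℕ) + 1)) / ((n : ℝ) - 1)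
              - ((n : ℝ) + 1 - 2 * ((j : ℕ) + 1)) / ((n : ℝ) - 1)) * (1 - 1 / (n : ℝ)) / 4
          - 3 * (((n : ℝ) + 1 - 2 * ((i : ℕ) + 1)) / ((n : ℝ) - 1))
              * (((n : ℝ) + 1 - 2 * ((j : ℕ) + 1)) / ((n : ℝ) - 1))
              * (((n : ℝ) + 1 - 2 * ((i : ℕ) + 1)) / ((n : ℝ) - 1)
                - ((n : ℝ) + 1 - 2 * ((j : ℕ) + 1)) / ((n : ℝ) - 1))
              * ((n : ℝ) - 1) ^ 2 / (4 * (n : ℝ) * ((n : ℝ) + 1)))) ∧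
    (∀ n : ℕ, 2 ≤ n → (Mstar n)ᵀ = -Mstar n) ∧
    (∃ C : ℝ, 0 < C ∧ ∀ n : ℕ, 2 ≤ n → ∀ i j : Fin n, |Mstar n i j| ≤ C) :=
  ⟨part1, part2, ⟨10, by norm_num, part3bound⟩⟩
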